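/- The entropy density h is a convex function on the convex set 𝒪. -/

import Mathlib

open Real Set MeasureTheory intervalIntegral

/-- `q(M) = (p(M)/M) ∫₀^M s^a / ((1-s)^b p(s)²) ds`. -/
noncomputable def qfun (p : ℝ → ℝ) (a b : ℝ) (M : ℝ) : ℝ :=
  p M / M * ∫ s in (0:ℝ)..M, s ^ a / ((1 - s) ^ b * p s ^ 2)

/-- Entropy density `h(u) = Σᵢ (uᵢ(log uᵢ − 1) + 1) + ∫₀^M log(q(s)/p(s)) ds`,
`M = Σᵢ uᵢ`. -/
noncomputable def hent (p : ℝ → ℝ) (a b : ℝ) {n : ℕ} (u : Fin n → ℝ) : ℝ :=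
  (∑ i, (u i * (Real.log (u i) - 1) + 1)) +
    ∫ s in (0:ℝ)..(∑ i, u i), Real.log (qfun p a b s / p s)

namespace HentProof

/-- The integrand in `qfun`. -/
noncomputable def ff (p : ℝ → ℝ) (a b : ℝ) (s : ℝ) : ℝ :=
  s ^ a / ((1 - s) ^ b * p s ^ 2)

/-- The primitive `A(M) = ∫₀^M f`. -/
noncomputable def AA (p : ℝ → ℝ) (a b : ℝ) (M : ℝ) : ℝ :=
  ∫ s in (0:ℝ)..M, ff p a b s

/-- The integrand in the entropy integral. -/
noncomputable def gg (p : ℝ → ℝ) (a b : ℝ) (s : ℝ) : ℝ :=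
  Real.log (qfun p a b s / p s)

section Aux

variable {p : ℝ → ℝ} {a b : ℝ}
variable (ha : 1 ≤ a) (hb : 1 ≤ b) (hpc : ContinuousOn p (Icc 0 1))
  (hpa : AntitoneOn p (Icc 0 1)) (hppos : ∀ M ∈ Ico (0:ℝ) 1, 0 < p M)

lemma denom_pos (hppos : ∀ M ∈ Ico (0:ℝ) 1, 0 < p M) {s : ℝ} (hs : s ∈ Ico (0:ℝ) 1) :
    0 < (1 - s) ^ b * p s ^ 2 :=
  mul_pos (Real.rpow_pos_of_pos (by linarith [hs.2]) b)
    (pow_pos (hppos s hs) 2)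

lemma ff_nonneg (hppos : ∀ M ∈ Ico (0:ℝ) 1, 0 < p M) {s : ℝ} (hs : s ∈ Ico (0:ℝ) 1) :
    0 ≤ ff p a b s :=
  div_nonneg (Real.rpow_nonneg hs.1 a) (denom_pos hppos hs).le

lemma ff_pos (hppos : ∀ M ∈ Ico (0:ℝ) 1, 0 < p M) {s : ℝ} (hs : s ∈ Ioo (0:ℝ) 1) :
    0 < ff p a b s :=
  div_pos (Real.rpow_pos_of_pos hs.1 a) (denom_pos hppos ⟨hs.1.le, hs.2⟩)

lemma ff_mono (ha : 1 ≤ a) (hb : 1 ≤ b) (hpa : AntitoneOn p (Icc 0 1))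
    (hppos : ∀ M ∈ Ico (0:ℝ) 1, 0 < p M) :
    MonotoneOn (ff p a b) (Ico (0:ℝ) 1) := by
  intro x hx y hy hxy
  have ha0 : (0:ℝ) ≤ a := by linarith
  have hb0 : (0:ℝ) ≤ b := by linarith
  have hnum : x ^ a ≤ y ^ a := Real.rpow_le_rpow hx.1 hxy ha0
  have hd1 : (1 - y) ^ b ≤ (1 - x) ^ b :=
    Real.rpow_le_rpow (by linarith [hy.2]) (by linarith) hb0
  have hpxy : p y ≤ p x := hpa ⟨hx.1, by linarith [hx.2]⟩ ⟨hy.1, by linarith [hy.2]⟩ hxy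
  have hpy : 0 < p y := hppos y hy
  have hd2 : p y ^ 2 ≤ p x ^ 2 := by nlinarith
  have hdy : 0 < (1 - y) ^ b * p y ^ 2 := denom_pos hppos hy
  have hd : (1 - y) ^ b * p y ^ 2 ≤ (1 - x) ^ b * p x ^ 2 := by
    have h1 : (0:ℝ) ≤ (1 - y) ^ b := (Real.rpow_pos_of_pos (by linarith [hy.2]) b).le
    nlinarith [Real.rpow_pos_of_pos (show (0:ℝ) < 1 - x by linarith [hx.2]) b]
  exact div_le_div₀ (Real.rpow_nonneg hy.1 a) hnum hdy hd

lemma ff_contOn (ha : 1 ≤ a) (hb : 1 ≤ b) (hpc : ContinuousOn p (Icc 0 1))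
    (hppos : ∀ M ∈ Ico (0:ℝ) 1, 0 < p M) {M : ℝ} (hM0 : 0 ≤ M) (hM1 : M < 1) :
    ContinuousOn (ff p a b) (Icc 0 M) := by
  have hsub : Icc (0:ℝ) M ⊆ Icc 0 1 := Icc_subset_Icc le_rfl hM1.le
  have hc1 : Continuous fun s : ℝ => s ^ a := by
    rw [continuous_iff_continuousAt]
    intro x
    exact Real.continuousAt_rpow_const x a (Or.inr (by linarith))
  have hc2 : ContinuousOn (fun s : ℝ => (1 - s) ^ b) (Icc 0 M) :=
    (continuous_const.sub continuous_id).continuousOn.rpow_const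
      (fun x _ => Or.inr (by linarith))
  have hc3 : ContinuousOn (fun s => p s ^ 2) (Icc 0 M) := (hpc.mono hsub).pow 2
  exact hc1.continuousOn.div (hc2.mul hc3)
    (fun x hx => (denom_pos hppos ⟨hx.1, lt_of_le_of_lt hx.2 hM1⟩).ne')

lemma ff_intable (ha : 1 ≤ a) (hb : 1 ≤ b) (hpc : ContinuousOn p (Icc 0 1))
    (hppos : ∀ M ∈ Ico (0:ℝ) 1, 0 < p M) {x M : ℝ} (hx0 : 0 ≤ x) (hxM : x ≤ M) (hM1 : M < 1) :
    IntervalIntegrable (ff p a b) volume x M := by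
  apply ContinuousOn.intervalIntegrable
  rw [uIcc_of_le hxM]
  exact (ff_contOn ha hb hpc hppos (hx0.trans hxM) hM1).mono (Icc_subset_Icc hx0 le_rfl)

lemma AA_pos (ha : 1 ≤ a) (hb : 1 ≤ b) (hpc : ContinuousOn p (Icc 0 1))
    (hppos : ∀ M ∈ Ico (0:ℝ) 1, 0 < p M) {M : ℝ} (hM : M ∈ Ioo (0:ℝ) 1) :
    0 < AA p a b M :=
  intervalIntegral_pos_of_pos_on (ff_intable ha hb hpc hppos le_rfl hM.1.le hM.2)
    (fun x hx => ff_pos hppos ⟨hx.1, hx.2.trans hM.2⟩) hM.1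

/-- `A(M)/M` is monotone on `(0,1)`: key step using monotonicity of `f`. -/
lemma AA_div_mono (ha : 1 ≤ a) (hb : 1 ≤ b) (hpc : ContinuousOn p (Icc 0 1))
    (hpa : AntitoneOn p (Icc 0 1)) (hppos : ∀ M ∈ Ico (0:ℝ) 1, 0 < p M)
    {x y : ℝ} (hx : x ∈ Ioo (0:ℝ) 1) (hy : y ∈ Ioo (0:ℝ) 1) (hxy : x ≤ y) :
    AA p a b x / x ≤ AA p a b y / y := by
  rcases eq_or_lt_of_le hxy with rfl | hlt
  · exact le_rfl
  have hfx : x ∈ Ico (0:ℝ) 1 := ⟨hx.1.le, hx.2⟩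
  -- A x ≤ x * f x
  have h1 : AA p a b x ≤ x * ff p a b x := by
    have := integral_mono_on hx.1.le (ff_intable ha hb hpc hppos le_rfl hx.1.le hx.2)
      (_root_.intervalIntegrable_const (c := ff p a b x))
      (fun t ht => ff_mono ha hb hpa hppos ⟨ht.1, lt_of_le_of_lt ht.2 hx.2⟩ hfx ht.2)
    simpa [AA, smul_eq_mul, mul_comm] using this
  -- (y - x) * f x ≤ ∫ x..y f
  have h2 : (y - x) * ff p a b x ≤ ∫ s in x..y, ff p a b s := by
    have := integral_mono_on hxy (_root_.intervalIntegrable_const (c := ff p a b x))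
      (ff_intable ha hb hpc hppos hx.1.le hxy hy.2)
      (fun t ht => ff_mono ha hb hpa hppos hfx ⟨hx.1.le.trans ht.1, lt_of_le_of_lt ht.2 hy.2⟩ ht.1)
    simpa [smul_eq_mul, mul_comm] using this
  have h3 : AA p a b x + (y - x) * ff p a b x ≤ AA p a b y := by
    have hadd : (∫ s in (0:ℝ)..x, ff p a b s) + ∫ s in x..y, ff p a b s
        = ∫ s in (0:ℝ)..y, ff p a b s :=
      integral_add_adjacent_intervals (ff_intable ha hb hpc hppos le_rfl hx.1.le hx.2)
        (ff_intable ha hb hpc hppos hx.1.le hxy hy.2)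
    have : AA p a b y = AA p a b x + ∫ s in x..y, ff p a b s := by
      rw [AA, AA, ← hadd]
    linarith
  rw [div_le_div_iff₀ hx.1 hy.1]
  nlinarith [mul_le_mul_of_nonneg_right h1 (sub_nonneg.2 hxy),
    mul_le_mul_of_nonneg_left h3 hx.1.le]

lemma gg_eq (hppos : ∀ M ∈ Ico (0:ℝ) 1, 0 < p M) {s : ℝ} (hs : s ∈ Ioo (0:ℝ) 1) :
    gg p a b s = Real.log (AA p a b s / s) := by
  have hps : p s ≠ 0 := (hppos s ⟨hs.1.le, hs.2⟩).ne'
  have hs0 : s ≠ 0 := hs.1.ne'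
  have : qfun p a b s / p s = AA p a b s / s := by
    show p s / s * AA p a b s / p s = AA p a b s / s
    field_simp
  rw [gg, this]

lemma gg_mono (ha : 1 ≤ a) (hb : 1 ≤ b) (hpc : ContinuousOn p (Icc 0 1))
    (hpa : AntitoneOn p (Icc 0 1)) (hppos : ∀ M ∈ Ico (0:ℝ) 1, 0 < p M) :
    MonotoneOn (gg p a b) (Ioo (0:ℝ) 1) := by
  intro x hx y hy hxy
  rw [gg_eq hppos hx, gg_eq hppos hy]
  exact Real.log_le_log (div_pos (AA_pos ha hb hpc hppos hx) hx.1)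
    (AA_div_mono ha hb hpc hpa hppos hx hy hxy)

lemma AA_contOn (ha : 1 ≤ a) (hb : 1 ≤ b) (hpc : ContinuousOn p (Icc 0 1))
    (hppos : ∀ M ∈ Ico (0:ℝ) 1, 0 < p M) {M : ℝ} (hM0 : 0 ≤ M) (hM1 : M < 1) :
    ContinuousOn (AA p a b) (Icc 0 M) := by
  have : IntegrableOn (ff p a b) (uIcc 0 M) volume := by
    rw [uIcc_of_le hM0]
    exact (ff_contOn ha hb hpc hppos hM0 hM1).integrableOn_compact isCompact_Icc
  unfold AA
  rw [show Icc (0:ℝ) M = uIcc 0 M from (uIcc_of_le hM0).symm]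
  exact continuousOn_primitive_interval this

lemma AA_lower (ha : 1 ≤ a) (hb : 1 ≤ b) (hpc : ContinuousOn p (Icc 0 1))
    (hpa : AntitoneOn p (Icc 0 1)) (hppos : ∀ M ∈ Ico (0:ℝ) 1, 0 < p M)
    {s : ℝ} (hs : s ∈ Ioo (0:ℝ) 1) :
    s ^ (a+1) / (p 0 ^ 2) / (a+1) ≤ AA p a b s := by
  have hp0 : 0 < p 0 := hppos 0 ⟨le_rfl, one_pos⟩
  have key : ∀ t ∈ Icc (0:ℝ) s, t ^ a / (p 0 ^ 2) ≤ ff p a b t := by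
    intro t ht
    have ht1 : t < 1 := lt_of_le_of_lt ht.2 hs.2
    have hD : (1 - t) ^ b * p t ^ 2 ≤ p 0 ^ 2 := by
      have h1 : (1 - t) ^ b ≤ 1 :=
        Real.rpow_le_one (by linarith) (by linarith [ht.1]) (by linarith)
      have h2 : p t ≤ p 0 := hpa ⟨le_rfl, zero_le_one⟩ ⟨ht.1, ht1.le⟩ ht.1
      have h3 : 0 < p t := hppos t ⟨ht.1, ht1⟩
      have h4 : p t ^ 2 ≤ p 0 ^ 2 := by nlinarith
      have h5 : (0:ℝ) ≤ (1 - t) ^ b := (Real.rpow_pos_of_pos (by linarith) b).le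
      calc (1 - t) ^ b * p t ^ 2 ≤ 1 * (p 0 ^ 2) :=
            mul_le_mul h1 h4 (sq_nonneg _) zero_le_one
        _ = p 0 ^ 2 := one_mul _
    exact div_le_div_of_nonneg_left (Real.rpow_nonneg ht.1 a)
      (denom_pos hppos ⟨ht.1, ht1⟩) hD
  have hint : (∫ t in (0:ℝ)..s, t ^ a / p 0 ^ 2) ≤ AA p a b s := by
    apply integral_mono_on hs.1.le _ (ff_intable ha hb hpc hppos le_rfl hs.1.le hs.2) key
    exact (intervalIntegrable_rpow' (by linarith)).div_const _
  have hcalc : (∫ t in (0:ℝ)..s, t ^ a / p 0 ^ 2) = s ^ (a+1) / (p 0 ^ 2) / (a+1) := by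
    rw [intervalIntegral.integral_div, integral_rpow (Or.inl (by linarith))]
    rw [Real.zero_rpow (by positivity : (a:ℝ) + 1 ≠ 0)]
    ring
  rw [← hcalc]
  exact hint

lemma AA_upper (ha : 1 ≤ a) (hb : 1 ≤ b) (hpc : ContinuousOn p (Icc 0 1))
    (hpa : AntitoneOn p (Icc 0 1)) (hppos : ∀ M ∈ Ico (0:ℝ) 1, 0 < p M)
    {s M : ℝ} (hM : M ∈ Ioo (0:ℝ) 1) (hs : s ∈ Ioc (0:ℝ) M) :
    AA p a b s ≤ s ^ (a+1) / ((1 - M) ^ b * p M ^ 2) / (a+1) := by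
  have hDM : 0 < (1 - M) ^ b * p M ^ 2 := denom_pos hppos ⟨hM.1.le, hM.2⟩
  have key : ∀ t ∈ Icc (0:ℝ) s, ff p a b t ≤ t ^ a / ((1 - M) ^ b * p M ^ 2) := by
    intro t ht
    have htM : t ≤ M := ht.2.trans hs.2
    have ht1 : t < 1 := lt_of_le_of_lt htM hM.2
    have hD : (1 - M) ^ b * p M ^ 2 ≤ (1 - t) ^ b * p t ^ 2 := by
      have h1 : (1 - M) ^ b ≤ (1 - t) ^ b :=
        Real.rpow_le_rpow (by linarith [hM.2]) (by linarith) (by linarith)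
      have h2 : p M ≤ p t := hpa ⟨ht.1, ht1.le⟩ ⟨hM.1.le, hM.2.le⟩ htM
      have h3 : 0 < p M := hppos M ⟨hM.1.le, hM.2⟩
      have h4 : p M ^ 2 ≤ p t ^ 2 := by nlinarith
      exact mul_le_mul h1 h4 (sq_nonneg _)
        ((Real.rpow_pos_of_pos (by linarith) b).le)
    exact div_le_div_of_nonneg_left (Real.rpow_nonneg ht.1 a) hDM hD
  have hint : AA p a b s ≤ ∫ t in (0:ℝ)..s, t ^ a / ((1 - M) ^ b * p M ^ 2) := by
    apply integral_mono_on hs.1.le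
      (ff_intable ha hb hpc hppos le_rfl hs.1.le (lt_of_le_of_lt hs.2 hM.2)) _ key
    exact (intervalIntegrable_rpow' (by linarith)).div_const _
  have hcalc : (∫ t in (0:ℝ)..s, t ^ a / ((1 - M) ^ b * p M ^ 2))
      = s ^ (a+1) / ((1 - M) ^ b * p M ^ 2) / (a+1) := by
    rw [intervalIntegral.integral_div, integral_rpow (Or.inl (by linarith))]
    rw [Real.zero_rpow (by positivity : (a:ℝ) + 1 ≠ 0)]
    ring
  exact hint.trans hcalc.le

lemma neg_log_le (s : ℝ) (hs : 0 < s) : -Real.log s ≤ 2 * s ^ (-(1/2) : ℝ) := by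
  have h := Real.log_le_sub_one_of_pos (Real.rpow_pos_of_pos hs (-(1/2) : ℝ))
  rw [Real.log_rpow hs] at h
  have hp : 0 < s ^ (-(1/2) : ℝ) := Real.rpow_pos_of_pos hs _
  nlinarith

lemma gg_intable (ha : 1 ≤ a) (hb : 1 ≤ b) (hpc : ContinuousOn p (Icc 0 1))
    (hpa : AntitoneOn p (Icc 0 1)) (hppos : ∀ M ∈ Ico (0:ℝ) 1, 0 < p M)
    {M : ℝ} (hM : M ∈ Ioo (0:ℝ) 1) :
    IntervalIntegrable (gg p a b) volume 0 M := by
  set c : ℝ := 1 / (p 0 ^ 2) / (a+1) with hc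
  set C : ℝ := 1 / ((1 - M) ^ b * p M ^ 2) / (a+1) with hC
  have hp0 : 0 < p 0 := hppos 0 ⟨le_rfl, one_pos⟩
  have hDM : 0 < (1 - M) ^ b * p M ^ 2 := denom_pos hppos ⟨hM.1.le, hM.2⟩
  have hcpos : 0 < c := by positivity
  have hCpos : 0 < C := by positivity
  set K : ℝ := |Real.log c| + |Real.log C| with hK
  -- the dominating function
  set B : ℝ → ℝ := fun s => K + (2 * a) * s ^ (-(1/2) : ℝ) with hB
  have hBint : IntervalIntegrable B volume 0 M :=
    _root_.intervalIntegrable_const.add ((intervalIntegrable_rpow' (by norm_num)).const_mul _)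
  -- continuity of gg on Ioc 0 M (for measurability)
  have hgcont : ContinuousOn (gg p a b) (Ioc 0 M) := by
    have hA : ContinuousOn (AA p a b) (Ioc 0 M) :=
      (AA_contOn ha hb hpc hppos hM.1.le hM.2).mono Ioc_subset_Icc_self
    have : ContinuousOn (fun s => Real.log (AA p a b s / s)) (Ioc 0 M) := by
      apply ContinuousOn.log
      · exact hA.div continuousOn_id (fun x hx => hx.1.ne')
      · intro x hx
        exact (div_pos (AA_pos ha hb hpc hppos ⟨hx.1, lt_of_le_of_lt hx.2 hM.2⟩) hx.1).ne'
    exact this.congr (fun x hx => gg_eq hppos ⟨hx.1, lt_of_le_of_lt hx.2 hM.2⟩)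
  apply hBint.mono_fun
  · rw [uIoc_of_le hM.1.le]
    exact hgcont.aestronglyMeasurable measurableSet_Ioc
  · rw [uIoc_of_le hM.1.le]
    filter_upwards [ae_restrict_mem measurableSet_Ioc] with s hs
    have hs1 : s < 1 := lt_of_le_of_lt hs.2 hM.2
    have hsmem : s ∈ Ioo (0:ℝ) 1 := ⟨hs.1, hs1⟩
    have hApos : 0 < AA p a b s := AA_pos ha hb hpc hppos hsmem
    have hspos : 0 < s := hs.1
    have hslog : Real.log s ≤ 0 := Real.log_nonpos hspos.le hs1.le
    -- bounds on AA s / s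
    have hlow : c * s ^ a ≤ AA p a b s / s := by
      have hsa : s ^ (a+1) = s ^ a * s := by
        rw [Real.rpow_add hspos, Real.rpow_one]
      rw [le_div_iff₀ hspos]
      calc c * s ^ a * s = s ^ (a+1) / (p 0 ^ 2) / (a+1) := by
            rw [hsa, hc]; ring
        _ ≤ AA p a b s := AA_lower ha hb hpc hpa hppos hsmem
    have hup : AA p a b s / s ≤ C * s ^ a := by
      have hsa : s ^ (a+1) = s ^ a * s := by
        rw [Real.rpow_add hspos, Real.rpow_one]
      rw [div_le_iff₀ hspos]
      calc AA p a b s ≤ s ^ (a+1) / ((1 - M) ^ b * p M ^ 2) / (a+1) :=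
            AA_upper ha hb hpc hpa hppos hM hs
        _ = C * s ^ a * s := by rw [hsa, hC]; ring
    have hgval : gg p a b s = Real.log (AA p a b s / s) := gg_eq hppos hsmem
    have hsa_pos : 0 < s ^ a := Real.rpow_pos_of_pos hspos a
    have hub : Real.log (AA p a b s / s) ≤ Real.log C + a * Real.log s := by
      calc Real.log (AA p a b s / s) ≤ Real.log (C * s ^ a) :=
            Real.log_le_log (div_pos hApos hspos) hup
        _ = Real.log C + a * Real.log s := by
            rw [Real.log_mul hCpos.ne' hsa_pos.ne', Real.log_rpow hspos]
    have hlb : Real.log c + a * Real.log s ≤ Real.log (AA p a b s / s) := by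
      calc Real.log c + a * Real.log s = Real.log (c * s ^ a) := by
            rw [Real.log_mul hcpos.ne' hsa_pos.ne', Real.log_rpow hspos]
        _ ≤ Real.log (AA p a b s / s) := Real.log_le_log (by positivity) hlow
    have hneg : -Real.log s ≤ 2 * s ^ (-(1/2) : ℝ) := neg_log_le s hspos
    have hBpos : 0 ≤ B s := by
      have : 0 < s ^ (-(1/2) : ℝ) := Real.rpow_pos_of_pos hspos _
      have hK0 : 0 ≤ K := by positivity
      have ha0 : (0:ℝ) ≤ a := by linarith
      simp only [hB]
      nlinarith
    rw [Real.norm_eq_abs, Real.norm_eq_abs, hgval, abs_of_nonneg hBpos]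
    rw [abs_le]
    constructor
    · have ha0 : (0:ℝ) ≤ a := by linarith
      have : -(K + 2 * a * s ^ (-(1/2):ℝ)) ≤ Real.log c + a * Real.log s := by
        have h2 : a * (-Real.log s) ≤ a * (2 * s ^ (-(1/2):ℝ)) :=
          mul_le_mul_of_nonneg_left hneg ha0
        have h3 : -|Real.log c| ≤ Real.log c := neg_abs_le _
        have h4 : 0 ≤ |Real.log C| := abs_nonneg _
        simp only [hK]
        nlinarith
      exact this.trans hlb
    · have ha0 : (0:ℝ) ≤ a := by linarith
      have h3 : Real.log C ≤ |Real.log C| := le_abs_self _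
      have h4 : 0 ≤ |Real.log c| := abs_nonneg _
      have h5 : a * Real.log s ≤ 0 := mul_nonpos_of_nonneg_of_nonpos ha0 hslog
      have h6 : 0 ≤ 2 * a * s ^ (-(1/2):ℝ) := by positivity
      refine hub.trans ?_
      simp only [hK, hB]
      nlinarith

/-- The primitive of `gg` is convex on `(0,1)`. -/
lemma FF_convex (ha : 1 ≤ a) (hb : 1 ≤ b) (hpc : ContinuousOn p (Icc 0 1))
    (hpa : AntitoneOn p (Icc 0 1)) (hppos : ∀ M ∈ Ico (0:ℝ) 1, 0 < p M) :
    ConvexOn ℝ (Ioo (0:ℝ) 1) (fun M => ∫ s in (0:ℝ)..M, gg p a b s) := by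
  apply convexOn_of_slope_mono_adjacent (convex_Ioo 0 1)
  intro x y z hx hz hxy hyz
  have hy : y ∈ Ioo (0:ℝ) 1 := ⟨hx.1.trans hxy, hyz.trans hz.2⟩
  have hix : IntervalIntegrable (gg p a b) volume 0 x := gg_intable ha hb hpc hpa hppos hx
  have hiy : IntervalIntegrable (gg p a b) volume 0 y := gg_intable ha hb hpc hpa hppos hy
  have hiz : IntervalIntegrable (gg p a b) volume 0 z := gg_intable ha hb hpc hpa hppos hz
  have hsub1 : Set.uIoc x y ⊆ Set.uIoc (0:ℝ) y := by
    rw [uIoc_of_le hxy.le, uIoc_of_le hy.1.le]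
    exact Ioc_subset_Ioc hx.1.le le_rfl
  have hsub2 : Set.uIoc y z ⊆ Set.uIoc (0:ℝ) z := by
    rw [uIoc_of_le hyz.le, uIoc_of_le hz.1.le]
    exact Ioc_subset_Ioc hy.1.le le_rfl
  have hixy : IntervalIntegrable (gg p a b) volume x y := hiy.mono_set' hsub1
  have hiyz : IntervalIntegrable (gg p a b) volume y z := hiz.mono_set' hsub2
  have heq1 : (∫ s in (0:ℝ)..y, gg p a b s) - ∫ s in (0:ℝ)..x, gg p a b s
      = ∫ s in x..y, gg p a b s := by
    rw [← integral_add_adjacent_intervals hix hixy]; ring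
  have heq2 : (∫ s in (0:ℝ)..z, gg p a b s) - ∫ s in (0:ℝ)..y, gg p a b s
      = ∫ s in y..z, gg p a b s := by
    rw [← integral_add_adjacent_intervals hiy hiyz]; ring
  have hmono := gg_mono ha hb hpc hpa hppos
  have hb1 : (∫ s in x..y, gg p a b s) ≤ (y - x) * gg p a b y := by
    have := integral_mono_on hxy.le hixy (_root_.intervalIntegrable_const (c := gg p a b y))
      (fun t ht => hmono ⟨hx.1.trans_le ht.1, lt_of_le_of_lt ht.2 hy.2⟩ hy ht.2)
    simpa [smul_eq_mul, mul_comm] using this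
  have hb2 : (z - y) * gg p a b y ≤ ∫ s in y..z, gg p a b s := by
    have := integral_mono_on hyz.le (_root_.intervalIntegrable_const (c := gg p a b y)) hiyz
      (fun t ht => hmono hy ⟨hy.1.trans_le ht.1, lt_of_le_of_lt ht.2 hz.2⟩ ht.1)
    simpa [smul_eq_mul, mul_comm] using this
  have e1 : (∫ s in (0:ℝ)..y, gg p a b s) - (∫ s in (0:ℝ)..x, gg p a b s)
      ≤ (y - x) * gg p a b y := by rw [heq1]; exact hb1
  have e2 : (z - y) * gg p a b y
      ≤ (∫ s in (0:ℝ)..z, gg p a b s) - (∫ s in (0:ℝ)..y, gg p a b s) := by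
    rw [heq2]; exact hb2
  rw [div_le_div_iff₀ (by linarith) (by linarith)]
  nlinarith [mul_le_mul_of_nonneg_right e1 (by linarith : (0:ℝ) ≤ z - y),
    mul_le_mul_of_nonneg_left e2 (by linarith : (0:ℝ) ≤ y - x)]

/-- `x ↦ x (log x − 1) + 1` is convex on `[0,∞)`. -/
lemma phi_convex : ConvexOn ℝ (Ici (0:ℝ)) (fun x => x * (Real.log x - 1) + 1) := by
  have h1 : ConvexOn ℝ (Ici (0:ℝ)) (fun x : ℝ => x * Real.log x) := Real.convexOn_mul_log
  have h2 : ConvexOn ℝ (Ici (0:ℝ)) (fun x : ℝ => 1 - x) := by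
    refine ⟨convex_Ici 0, fun x _ y _ s t hs ht hst => ?_⟩
    simp only [smul_eq_mul]
    nlinarith
  have heq : (fun x : ℝ => x * (Real.log x - 1) + 1)
      = (fun x : ℝ => x * Real.log x) + (fun x : ℝ => 1 - x) := by
    funext x
    simp only [Pi.add_apply]
    ring
  rw [heq]
  exact h1.add h2

lemma convexOn_finset_sum {ι : Type*} {E : Type*} [AddCommGroup E] [Module ℝ E]
    (t : Finset ι) {S : Set E} (hS : Convex ℝ S) {f : ι → E → ℝ}
    (h : ∀ i ∈ t, ConvexOn ℝ S (f i)) :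
    ConvexOn ℝ S (fun x => ∑ i ∈ t, f i x) := by
  classical
  induction t using Finset.induction_on with
  | empty => simpa using convexOn_const (0:ℝ) hS
  | @insert j t' hni ih =>
    simp only [Finset.sum_insert hni]
    exact (h j (Finset.mem_insert_self j t')).add
      (ih (fun i hi => h i (Finset.mem_insert_of_mem hi)))

end Aux

end HentProof

open HentProof in
/-- The entropy density `h` is a convex function on the convex set `𝒪`. -/
theorem hent_convexOn (a b : ℝ) (ha : 1 ≤ a) (hb : 1 ≤ b)
    (p : ℝ → ℝ) (hpc : ContinuousOn p (Icc 0 1))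
    (hpa : AntitoneOn p (Icc 0 1)) (hp1 : p 1 = 0)
    (hppos : ∀ M ∈ Ico (0:ℝ) 1, 0 < p M)
    (n : ℕ) (hn : 1 ≤ n) :
    ConvexOn ℝ {u : Fin n → ℝ | (∀ i, 0 < u i) ∧ ∑ i, u i < 1} (hent p a b) := by
  haveI : Nonempty (Fin n) := ⟨⟨0, hn⟩⟩
  set S : Set (Fin n → ℝ) := {u : Fin n → ℝ | (∀ i, 0 < u i) ∧ ∑ i, u i < 1} with hS
  -- the sum linear map
  let L : (Fin n → ℝ) →ₗ[ℝ] ℝ :=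
    { toFun := fun u => ∑ i, u i
      map_add' := by intro u v; simp [Finset.sum_add_distrib]
      map_smul' := by intro c u; simp [Finset.mul_sum] }
  have hSconv : Convex ℝ S := by
    have h1 : Convex ℝ {u : Fin n → ℝ | ∀ i, 0 < u i} := by
      have : {u : Fin n → ℝ | ∀ i, 0 < u i} = Set.pi univ (fun _ => Ioi (0:ℝ)) := by
        ext u; simp [Set.mem_pi]
      rw [this]
      exact convex_pi (fun i _ => convex_Ioi 0)
    have h2 : Convex ℝ {u : Fin n → ℝ | ∑ i, u i < 1} := by
      have : {u : Fin n → ℝ | ∑ i, u i < 1} = L ⁻¹' (Iio 1) := rfl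
      rw [this]
      exact (convex_Iio (1:ℝ)).linear_preimage L
    have : S = {u : Fin n → ℝ | ∀ i, 0 < u i} ∩ {u : Fin n → ℝ | ∑ i, u i < 1} := by
      ext u; simp [hS, Set.mem_setOf_eq, Set.mem_inter_iff]
    rw [this]
    exact h1.inter h2
  have hsum : ConvexOn ℝ S (fun u : Fin n → ℝ => ∑ i, (u i * (Real.log (u i) - 1) + 1)) := by
    apply convexOn_finset_sum Finset.univ hSconv
    intro i _
    have hcomp := phi_convex.comp_linearMap (LinearMap.proj (R := ℝ) (φ := fun _ : Fin n => ℝ) i)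
    exact (hcomp.subset (fun u hu => le_of_lt (hu.1 i)) hSconv)
  have hF : ConvexOn ℝ S (fun u : Fin n → ℝ =>
      ∫ s in (0:ℝ)..(∑ i, u i), Real.log (qfun p a b s / p s)) := by
    have hFc := (FF_convex ha hb hpc hpa hppos).comp_linearMap L
    have hsub : S ⊆ L ⁻¹' (Ioo 0 1) := by
      intro u hu
      refine ⟨Finset.sum_pos (fun i _ => hu.1 i) Finset.univ_nonempty, hu.2⟩
    exact (hFc.subset hsub hSconv)
  have heq : hent p a b = (fun u : Fin n → ℝ => ∑ i, (u i * (Real.log (u i) - 1) + 1))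
      + (fun u : Fin n → ℝ => ∫ s in (0:ℝ)..(∑ i, u i), Real.log (qfun p a b s / p s)) := by
    funext u
    simp [hent, Pi.add_apply]
  rw [heq]
  exact hsum.add hF
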